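/- Let H be a finite abelian group, let K be a group generated by two elements a and b with a of finite order and gcd(|H|, ord(a)) = 1, and let G = H × K. Let ⋆̃ be a multiplicative Lie algebra structure on G such that H (identified with H × {1}) is an ideal of (G, ⋆̃) and ⋆̃ is trivial on H × {1}. Then there exist a multiplicative Lie algebra structure ⋆ on K and a map Γ : K → End(H) satisfying Γ_{xy}(h) = Γ_x(h)·Γ_y(h), Γ_{x⋆y}(h) = Γ_x(Γ_y(h))·Γ_y(Γ_x(h⁻¹)), and Γ_{x⋆y}(l)·Γ_{y⋆z}(h)·Γ_{z⋆x}(k) = 1 for all x, y, z ∈ K and h, k, l ∈ H, such that (h,x) ⋆̃ (k,y) = (Γ_x(k)·Γ_y(h⁻¹), x ⋆ y) for all (h,x), (k,y) ∈ G. -/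

import Mathlib

/-- A multiplicative Lie algebra structure on a group `G`. -/
def IsMulLieAlgebra {G : Type*} [Group G] (star : G → G → G) : Prop :=
  (∀ x, star x x = 1) ∧
  (∀ x y z, star x (y * z) = star x y * (y * star x z * y⁻¹)) ∧
  (∀ x y z, star (x * y) z = (x * star y z * x⁻¹) * star x z) ∧
  (∀ x y z,
    star (star x y) (y * z * y⁻¹) * star (star y z) (z * x * z⁻¹) *
      star (star z x) (x * y * x⁻¹) = 1) ∧
  (∀ x y z, z * star x y * z⁻¹ = star (z * x * z⁻¹) (z * y * z⁻¹))

/-- for `G = H × K` with `H` finite abelian, `K = ⟨a, b⟩`,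
`a` of finite order and `gcd(|H|, ord(a)) = 1`, every multiplicative Lie algebra
structure on `G` for which `H × {1}` is an ideal with trivial bracket is given by
`(h,x) ⋆̃ (k,y) = (Γ_x(k)·Γ_y(h⁻¹), x ⋆ y)` for a multiplicative Lie algebra
structure `⋆` on `K` and a multiplicative Lie algebra homomorphism `Γ`. -/
theorem dp_two_generators {H K : Type*} [CommGroup H] [Finite H] [Group K]
    (a b : K) (hgen : Subgroup.closure ({a, b} : Set K) = ⊤)
    (ha : IsOfFinOrder a) (hcop : Nat.Coprime (Nat.card H) (orderOf a))
    (tstar : H × K → H × K → H × K) (htstar : IsMulLieAlgebra tstar)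
    (hIdeal : ∀ (g : H × K) (h : H),
      tstar g (h, 1) ∈ Set.range (fun h : H => ((h, 1) : H × K)))
    (hTriv : ∀ h₁ h₂ : H, tstar (h₁, 1) (h₂, 1) = 1) :
    ∃ (star : K → K → K) (Γ : K → (H →* H)),
      IsMulLieAlgebra star ∧
      (∀ (x y : K) (h : H), Γ (x * y) h = Γ x h * Γ y h) ∧
      (∀ (x y : K) (h : H), Γ (star x y) h = Γ x (Γ y h) * Γ y (Γ x (h⁻¹))) ∧
      (∀ (x y z : K) (h k l : H),
        Γ (star x y) l * Γ (star y z) h * Γ (star z x) k = 1) ∧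
      ∀ (h k : H) (x y : K),
        tstar (h, x) (k, y) = (Γ x k * Γ y (h⁻¹), star x y) := by
  obtain ⟨L1, L2, L3, L4, L5⟩ := htstar
  -- unit lemmas
  have u1 : ∀ z : H × K, tstar 1 z = 1 := by
    intro z
    have h := L3 1 1 z
    simp only [mul_one, one_mul, inv_one] at h
    exact mul_eq_right.mp h.symm
  have anti : ∀ u v : H × K, tstar v u = (tstar u v)⁻¹ := by
    intro u v
    have h := L1 (u * v)
    rw [L3 u v (u * v), L2 v u v, L2 u u v, L1 v, L1 u] at h
    have h3 : u * (tstar v u * tstar u v) * u⁻¹ = 1 := by rw [← h]; group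
    have h2 : tstar v u * tstar u v = 1 := by
      calc tstar v u * tstar u v
          = u⁻¹ * (u * (tstar v u * tstar u v) * u⁻¹) * u := by group
        _ = u⁻¹ * 1 * u := by rw [h3]
        _ = 1 := by group
    exact eq_inv_of_mul_eq_one_left h2
  have u2 : ∀ z : H × K, tstar z 1 = 1 := by
    intro z; rw [anti, u1, inv_one]
  have hsnd : ∀ (g : H × K) (h : H), tstar g (h, 1) = ((tstar g (h, 1)).1, 1) := by
    intro g h
    obtain ⟨h', e⟩ := hIdeal g h
    rw [← e]
  -- Γf
  set Γf : K → H → H := fun x k => (tstar ((1 : H), x) (k, (1 : K))).1 with hΓf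
  have Gdef : ∀ (x : K) (k : H), tstar ((1 : H), x) (k, 1) = (Γf x k, 1) := by
    intro x k; exact hsnd _ _
  have Grev : ∀ (x : K) (k : H), tstar (k, (1 : K)) ((1 : H), x) = ((Γf x k)⁻¹, 1) := by
    intro x k; rw [anti, Gdef, Prod.inv_mk, inv_one]
  have G1k : ∀ k : H, Γf 1 k = 1 := by
    intro k
    show (tstar ((1 : H), (1 : K)) (k, 1)).1 = 1
    rw [show (((1 : H), (1 : K)) : H × K) = 1 from rfl, u1]
    rfl
  have Gx1 : ∀ x : K, Γf x 1 = 1 := by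
    intro x
    show (tstar ((1 : H), x) ((1 : H), (1 : K))).1 = 1
    rw [show (((1 : H), (1 : K)) : H × K) = 1 from rfl, u2]
    rfl
  have GmulH : ∀ (x : K) (k l : H), Γf x (k * l) = Γf x k * Γf x l := by
    intro x k l
    have h := L2 ((1 : H), x) (k, (1 : K)) (l, 1)
    rw [show ((k, (1 : K)) : H × K) * (l, 1) = (k * l, 1) by
      rw [Prod.mk_mul_mk, mul_one], Gdef, Gdef, Gdef] at h
    have h2 := congrArg Prod.fst h
    simp only [Prod.fst_mul, Prod.fst_inv, Prod.inv_mk] at h2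
    rw [h2]
    show Γf x k * (k * Γf x l * k⁻¹) = _
    rw [mul_comm k (Γf x l), mul_inv_cancel_right]
  have GinvH : ∀ (x : K) (k : H), Γf x k⁻¹ = (Γf x k)⁻¹ := by
    intro x k
    have h := GmulH x k k⁻¹
    rw [mul_inv_cancel, Gx1] at h
    exact eq_inv_of_mul_eq_one_right h.symm
  have GmulK : ∀ (x y : K) (k : H), Γf (x * y) k = Γf x k * Γf y k := by
    intro x y k
    have h := L3 ((1 : H), x) ((1 : H), y) (k, (1 : K))
    rw [show (((1 : H), x) : H × K) * ((1 : H), y) = ((1 : H), x * y) by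
      rw [Prod.mk_mul_mk, one_mul], Gdef, Gdef, Gdef] at h
    have h2 := congrArg Prod.fst h
    simp only [Prod.fst_mul, Prod.fst_inv, Prod.inv_mk, one_mul, mul_one, inv_one] at h2
    rw [h2, mul_comm]
  have GinvK : ∀ (x : K) (k : H), Γf x⁻¹ k = (Γf x k)⁻¹ := by
    intro x k
    have h := GmulK x x⁻¹ k
    rw [mul_inv_cancel, G1k] at h
    exact eq_inv_of_mul_eq_one_right h.symm
  set Γ : K → (H →* H) := fun x => MonoidHom.mk' (Γf x) (fun k l => GmulH x k l) with hΓ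
  have GpowK : ∀ (n : ℕ) (x : K) (k : H), Γf (x ^ n) k = (Γf x k) ^ n := by
    intro n x k
    induction n with
    | zero => rw [pow_zero, pow_zero, G1k]
    | succ n ih => rw [pow_succ, pow_succ, GmulK, ih]
  have kill : ∀ s : H, s ^ orderOf a = 1 → s = 1 := by
    intro s hs
    have d1 : orderOf s ∣ orderOf a := orderOf_dvd_of_pow_eq_one hs
    have d2 : orderOf s ∣ Nat.card H := orderOf_dvd_natCard s
    have d3 : orderOf s ∣ Nat.gcd (Nat.card H) (orderOf a) := Nat.dvd_gcd d2 d1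
    rw [Nat.Coprime] at hcop
    rw [hcop] at d3
    exact orderOf_eq_one_iff.mp (Nat.dvd_one.mp d3)
  have Ga : ∀ k : H, Γf a k = 1 := by
    intro k
    apply kill
    rw [← GpowK, pow_orderOf_eq_one, G1k]
  -- σ lemmas
  have key0 : ∀ x y : K, (((1 : H), x) : H × K) * ((1 : H), y) = ((1 : H), x * y) := by
    intro x y; rw [Prod.mk_mul_mk, one_mul]
  have σmul2 : ∀ x y z : K, (tstar ((1 : H), x) ((1 : H), y * z)).1
      = (tstar ((1 : H), x) ((1 : H), y)).1 * (tstar ((1 : H), x) ((1 : H), z)).1 := by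
    intro x y z
    have h := L2 ((1 : H), x) ((1 : H), y) ((1 : H), z)
    rw [key0 y z] at h
    have h2 := congrArg Prod.fst h
    simpa only [Prod.fst_mul, Prod.fst_inv, one_mul, mul_one, inv_one] using h2
  have σmul1 : ∀ x y z : K, (tstar ((1 : H), x * y) ((1 : H), z)).1
      = (tstar ((1 : H), x) ((1 : H), z)).1 * (tstar ((1 : H), y) ((1 : H), z)).1 := by
    intro x y z
    have h := L3 ((1 : H), x) ((1 : H), y) ((1 : H), z)
    rw [key0 x y] at h
    have h2 := congrArg Prod.fst h
    simp only [Prod.fst_mul, Prod.fst_inv, one_mul, mul_one, inv_one] at h2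
    rw [h2, mul_comm]
  have σxx : ∀ x : K, (tstar ((1 : H), x) ((1 : H), x)).1 = 1 := by
    intro x; rw [L1]; rfl
  have σanti : ∀ x y : K, (tstar ((1 : H), y) ((1 : H), x)).1
      = ((tstar ((1 : H), x) ((1 : H), y)).1)⁻¹ := by
    intro x y; rw [anti]; rfl
  have σ1y : ∀ y : K, (tstar ((1 : H), (1 : K)) ((1 : H), y)).1 = 1 := by
    intro y; rw [show (((1 : H), (1 : K)) : H × K) = 1 from rfl, u1]; rfl
  have σx1 : ∀ x : K, (tstar ((1 : H), x) ((1 : H), (1 : K))).1 = 1 := by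
    intro x; rw [show (((1 : H), (1 : K)) : H × K) = 1 from rfl, u2]; rfl
  have σinv2 : ∀ x y : K, (tstar ((1 : H), x) ((1 : H), y⁻¹)).1
      = ((tstar ((1 : H), x) ((1 : H), y)).1)⁻¹ := by
    intro x y
    have h := σmul2 x y y⁻¹
    rw [mul_inv_cancel, σx1] at h
    exact eq_inv_of_mul_eq_one_right h.symm
  have σpow1 : ∀ (n : ℕ) (x y : K), (tstar ((1 : H), x ^ n) ((1 : H), y)).1
      = ((tstar ((1 : H), x) ((1 : H), y)).1) ^ n := by
    intro n x y
    induction n with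
    | zero => rw [pow_zero, pow_zero, σ1y]
    | succ n ih => rw [pow_succ, pow_succ, σmul1, ih]
  have σab : (tstar ((1 : H), a) ((1 : H), b)).1 = 1 := by
    apply kill
    rw [← σpow1, pow_orderOf_eq_one, σ1y]
  have σay_b : ∀ y : K, (tstar ((1 : H), a) ((1 : H), y)).1 = 1
      ∧ (tstar ((1 : H), b) ((1 : H), y)).1 = 1 := by
    intro y
    have hy : y ∈ Subgroup.closure ({a, b} : Set K) := by rw [hgen]; trivial
    induction hy using Subgroup.closure_induction with
    | mem g hg =>
      rcases (by simpa using hg : g = a ∨ g = b) with h' | h'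
      · rw [h']; exact ⟨σxx a, by rw [σanti a b, σab, inv_one]⟩
      · rw [h']; exact ⟨σab, σxx b⟩
    | one => exact ⟨σx1 a, σx1 b⟩
    | mul g1 g2 _ _ ih1 ih2 =>
      exact ⟨by rw [σmul2, ih1.1, ih2.1, one_mul],
        by rw [σmul2, ih1.2, ih2.2, one_mul]⟩
    | inv g _ ih =>
      exact ⟨by rw [σinv2, ih.1, inv_one], by rw [σinv2, ih.2, inv_one]⟩
  have σall : ∀ x y : K, (tstar ((1 : H), x) ((1 : H), y)).1 = 1 := by
    intro x y
    have hx : x ∈ Subgroup.closure ({a, b} : Set K) := by rw [hgen]; trivial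
    induction hx using Subgroup.closure_induction with
    | mem g hg =>
      rcases (by simpa using hg : g = a ∨ g = b) with h' | h'
      · rw [h']; exact (σay_b y).1
      · rw [h']; exact (σay_b y).2
    | one => exact σ1y y
    | mul g1 g2 _ _ ih1 ih2 => rw [σmul1, ih1, ih2, one_mul]
    | inv g _ ih =>
      have h := σmul1 g g⁻¹ y
      rw [mul_inv_cancel, σ1y, ih, one_mul] at h
      exact h.symm
  set starf : K → K → K := fun x y => (tstar ((1 : H), x) ((1 : H), y)).2 with hstarf
  have key : ∀ x y : K, tstar ((1 : H), x) ((1 : H), y) = ((1 : H), starf x y) := by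
    intro x y
    exact Prod.ext_iff.mpr ⟨σall x y, rfl⟩
  -- exponent lemma
  have hexp : ∀ x : K, ∃ t : ℤ, ∀ k : H, Γf x k = (Γf b k) ^ t := by
    intro x
    have hx : x ∈ Subgroup.closure ({a, b} : Set K) := by rw [hgen]; trivial
    induction hx using Subgroup.closure_induction with
    | mem g hg =>
      rcases (by simpa using hg : g = a ∨ g = b) with h' | h'
      · exact ⟨0, fun k => by rw [h', Ga, zpow_zero]⟩
      · exact ⟨1, fun k => by rw [h', zpow_one]⟩
    | one => exact ⟨0, fun k => by rw [G1k, zpow_zero]⟩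
    | mul g1 g2 _ _ ih1 ih2 =>
      obtain ⟨t, ht⟩ := ih1
      obtain ⟨s, hs⟩ := ih2
      exact ⟨t + s, fun k => by rw [GmulK, ht, hs, zpow_add]⟩
    | inv g _ ih =>
      obtain ⟨t, ht⟩ := ih
      exact ⟨-t, fun k => by rw [GinvK, ht, zpow_neg]⟩
  have hzb : ∀ (w : H) (u : ℤ), Γf b (w ^ u) = (Γf b w) ^ u := fun w u => map_zpow (Γ b) w u
  have hcomm : ∀ (x y : K) (k : H), Γf x (Γf y k) = Γf y (Γf x k) := by
    intro x y k
    obtain ⟨t, ht⟩ := hexp x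
    obtain ⟨s, hs⟩ := hexp y
    calc Γf x (Γf y k) = (Γf b (Γf y k)) ^ t := ht _
      _ = (Γf b ((Γf b k) ^ s)) ^ t := by rw [hs]
      _ = ((Γf b (Γf b k)) ^ s) ^ t := by rw [hzb]
      _ = ((Γf b (Γf b k)) ^ t) ^ s := by rw [← zpow_mul, ← zpow_mul, mul_comm]
      _ = (Γf b ((Γf b k) ^ t)) ^ s := by rw [hzb]
      _ = (Γf b (Γf x k)) ^ s := by rw [ht]
      _ = Γf y (Γf x k) := (hs _).symm
  -- conjugation products
  have conj1 : ∀ u v : K, (((1 : H), u) : H × K) * ((1 : H), v) * ((1 : H), u)⁻¹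
      = ((1 : H), u * v * u⁻¹) := by
    intro u v
    rw [Prod.inv_mk, Prod.mk_mul_mk, Prod.mk_mul_mk]
    simp
  have conjA : ∀ (u : K) (w : H), (((1 : H), u) : H × K) * (w, (1 : K)) * ((1 : H), u)⁻¹
      = (w, 1) := by
    intro u w
    rw [Prod.inv_mk, Prod.mk_mul_mk, Prod.mk_mul_mk]
    simp
  have conjB : ∀ (u : K) (w : H), ((w, (1 : K)) : H × K) * ((1 : H), u) * (w, (1 : K))⁻¹
      = ((1 : H), u) := by
    intro u w
    rw [Prod.inv_mk, Prod.mk_mul_mk, Prod.mk_mul_mk]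
    simp
  -- Γf vanishes on brackets
  have Gstar : ∀ (x y : K) (h : H), Γf (starf x y) h = 1 := by
    intro x y h
    have h4 := L4 ((1 : H), x) ((1 : H), y) ((h, (1 : K)) : H × K)
    rw [key x y, conjA y h, conjB x h, conj1 x y, Gdef (starf x y) h, Gdef y h,
      Grev x (Γf y h), Grev x h, Grev (x * y * x⁻¹) ((Γf x h)⁻¹)] at h4
    have h5 := congrArg Prod.fst h4
    simp only [Prod.fst_mul, Prod.fst_one] at h5
    have hconj : Γf (x * y * x⁻¹) ((Γf x h)⁻¹) = (Γf y (Γf x h))⁻¹ := by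
      have e1 : Γf (x * y * x⁻¹) ((Γf x h)⁻¹)
          = Γf x ((Γf x h)⁻¹) * Γf y ((Γf x h)⁻¹) * (Γf x ((Γf x h)⁻¹))⁻¹ := by
        rw [GmulK, GmulK, GinvK]
      rw [e1, mul_comm (Γf x ((Γf x h)⁻¹)) (Γf y ((Γf x h)⁻¹)), mul_inv_cancel_right,
        GinvH]
    rw [hconj, inv_inv, ← hcomm x y h] at h5
    rw [mul_assoc, inv_mul_cancel, mul_one] at h5
    exact h5
  refine ⟨starf, Γ, ⟨?_, ?_, ?_, ?_, ?_⟩, ?_, ?_, ?_, ?_⟩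
  · -- star x x = 1
    intro x
    have h := L1 (((1 : H), x) : H × K)
    exact congrArg Prod.snd h
  · -- bilinearity 1
    intro x y z
    have h := L2 ((1 : H), x) ((1 : H), y) ((1 : H), z)
    rw [key0 y z] at h
    exact congrArg Prod.snd h
  · -- bilinearity 2
    intro x y z
    have h := L3 ((1 : H), x) ((1 : H), y) ((1 : H), z)
    rw [key0 x y] at h
    exact congrArg Prod.snd h
  · -- Jacobi
    intro x y z
    have h := L4 ((1 : H), x) ((1 : H), y) ((1 : H), z)
    rw [key x y, key y z, key z x, conj1 y z, conj1 z x, conj1 x y] at h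
    exact congrArg Prod.snd h
  · -- equivariance
    intro x y z
    have h := L5 ((1 : H), x) ((1 : H), y) ((1 : H), z)
    rw [conj1 z x, conj1 z y] at h
    exact congrArg Prod.snd h
  · -- Γ multiplicative in K
    intro x y h
    exact GmulK x y h
  · -- Γ of bracket formula
    intro x y h
    show Γf (starf x y) h = Γf x (Γf y h) * Γf y (Γf x h⁻¹)
    rw [Gstar, GinvH, GinvH, ← hcomm x y h, mul_inv_cancel]
  · -- triple vanishing
    intro x y z h k l
    show Γf (starf x y) l * Γf (starf y z) h * Γf (starf z x) k = 1
    rw [Gstar, Gstar, Gstar, one_mul, one_mul]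
  · -- main formula
    intro h k x y
    have e1 : tstar ((1 : H), x) (k, y) = (Γf x k, starf x y) := by
      have h2 := L2 ((1 : H), x) (k, (1 : K)) ((1 : H), y)
      rw [show ((k, (1 : K)) : H × K) * ((1 : H), y) = (k, y) by
        rw [Prod.mk_mul_mk, mul_one, one_mul], Gdef x k, key x y] at h2
      rw [h2, Prod.inv_mk, Prod.mk_mul_mk, Prod.mk_mul_mk, Prod.mk_mul_mk]
      rw [Prod.mk.injEq]
      constructor
      · rw [mul_comm k (1 : H)]
        simp
      · simp
    have h3 : tstar ((k, y) : H × K) (h, 1) = (Γf y h, 1) := by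
      have h4 := L3 ((k, (1 : K)) : H × K) ((1 : H), y) ((h, (1 : K)))
      rw [show ((k, (1 : K)) : H × K) * ((1 : H), y) = (k, y) by
        rw [Prod.mk_mul_mk, mul_one, one_mul], Gdef y h, hTriv k h] at h4
      rw [h4, mul_one, Prod.inv_mk, Prod.mk_mul_mk, Prod.mk_mul_mk]
      rw [Prod.mk.injEq]
      constructor
      · rw [mul_comm k (Γf y h), mul_inv_cancel_right]
      · simp
    have e2 : tstar ((h, (1 : K)) : H × K) (k, y) = ((Γf y h)⁻¹, 1) := by
      rw [anti ((k, y) : H × K) ((h, (1 : K))), h3, Prod.inv_mk, inv_one]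
    have h2 := L3 ((h, (1 : K)) : H × K) ((1 : H), x) ((k, y))
    rw [show ((h, (1 : K)) : H × K) * ((1 : H), x) = (h, x) by
      rw [Prod.mk_mul_mk, mul_one, one_mul], e1, e2] at h2
    show tstar (h, x) (k, y) = (Γf x k * Γf y h⁻¹, starf x y)
    rw [h2, Prod.inv_mk, Prod.mk_mul_mk, Prod.mk_mul_mk, Prod.mk_mul_mk, GinvH y h]
    rw [Prod.mk.injEq]
    constructor
    · rw [mul_comm h (Γf x k), mul_inv_cancel_right]
    · simp
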